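/- Let D be a positive integer. The quadratic form x² + y² − Dz² − Dw² represents 0 non-trivially over Z (i.e., has a nonzero integer solution to x² + y² = D(z² + w²)) if and only if D is a sum of two integer squares. -/

import Mathlib

lemma aux_nat_sq (n : ℤ) (x y : ℤ) (h : n = x ^ 2 + y ^ 2) :
    ∃ a b : ℕ, n.toNat = a ^ 2 + b ^ 2 := by
  refine ⟨x.natAbs, y.natAbs, ?_⟩
  have hn : 0 ≤ n := by rw [h]; positivity
  have : (n.toNat : ℤ) = (x.natAbs : ℤ) ^ 2 + (y.natAbs : ℤ) ^ 2 := by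
    rw [Int.toNat_of_nonneg hn, h, Int.natAbs_sq, Int.natAbs_sq]
  exact_mod_cast this

/-- For a positive integer D, the quadratic form x² + y² − Dz² − Dw² represents 0
non-trivially over ℤ if and only if D is a sum of two integer squares. -/
theorem stmt_15 (D : ℤ) (hD : 0 < D) :
    (∃ x y z w : ℤ, ¬(x = 0 ∧ y = 0 ∧ z = 0 ∧ w = 0) ∧
      x ^ 2 + y ^ 2 - D * z ^ 2 - D * w ^ 2 = 0) ↔
    ∃ a b : ℤ, D = a ^ 2 + b ^ 2 := by
  constructor
  · rintro ⟨x, y, z, w, hnz, heq⟩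
    -- z² + w² ≠ 0
    have hzw : z ^ 2 + w ^ 2 ≠ 0 := by
      intro h0
      have hz : z = 0 := by nlinarith [sq_nonneg z, sq_nonneg w]
      have hw : w = 0 := by nlinarith [sq_nonneg z, sq_nonneg w]
      have hx : x = 0 := by nlinarith [sq_nonneg x, sq_nonneg y]
      have hy : y = 0 := by nlinarith [sq_nonneg x, sq_nonneg y]
      exact hnz ⟨hx, hy, hz, hw⟩
    have hNpos : 0 < z ^ 2 + w ^ 2 := lt_of_le_of_ne (by positivity) (Ne.symm hzw)
    set N : ℤ := z ^ 2 + w ^ 2 with hN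
    set M : ℤ := x ^ 2 + y ^ 2 with hM
    have hMN : M = D * N := by rw [hM, hN]; linarith
    -- move to naturals
    obtain ⟨a, b, hab⟩ := aux_nat_sq M x y rfl
    obtain ⟨c, d, hcd⟩ := aux_nat_sq N z w rfl
    have hMnat : M.toNat = D.toNat * N.toNat := by
      have : (M.toNat : ℤ) = ((D.toNat * N.toNat : ℕ) : ℤ) := by
        push_cast
        rw [Int.toNat_of_nonneg (by positivity : (0:ℤ) ≤ M),
          Int.toNat_of_nonneg hD.le, Int.toNat_of_nonneg hNpos.le, hMN]
      exact_mod_cast this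
    have hDnat : 0 < D.toNat := by omega
    have hNnat : 0 < N.toNat := by omega
    have hsum : ∃ a b : ℕ, D.toNat = a ^ 2 + b ^ 2 := by
      rw [Nat.eq_sq_add_sq_iff]
      intro q hq hq3
      haveI : Fact q.Prime := ⟨Nat.prime_of_mem_primeFactors hq⟩
      have hM' := Nat.eq_sq_add_sq_iff.mp ⟨a, b, hab⟩ q (Nat.mem_primeFactors.mpr ⟨Nat.prime_of_mem_primeFactors hq,
        hMnat ▸ Dvd.dvd.mul_right (Nat.dvd_of_mem_primeFactors hq) _, by rw [hMnat]; positivity⟩) hq3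
      have hN' : Even (padicValNat q N.toNat) := by
        by_cases hqN : q ∣ N.toNat
        · exact Nat.eq_sq_add_sq_iff.mp ⟨c, d, hcd⟩ q
            (Nat.mem_primeFactors.mpr ⟨Nat.prime_of_mem_primeFactors hq, hqN, hNnat.ne'⟩) hq3
        · rw [padicValNat.eq_zero_of_not_dvd hqN]; exact Even.zero
      rw [hMnat, padicValNat.mul hDnat.ne' hNnat.ne'] at hM'
      exact (Nat.even_add.mp hM').mpr hN'
    obtain ⟨a, b, hab⟩ := hsum
    refine ⟨a, b, ?_⟩
    have : (D.toNat : ℤ) = (a : ℤ) ^ 2 + (b : ℤ) ^ 2 := by exact_mod_cast hab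
    rwa [Int.toNat_of_nonneg hD.le] at this
  · rintro ⟨a, b, hab⟩
    exact ⟨a, b, 1, 0, fun h => one_ne_zero h.2.2.1, by rw [hab]; ring⟩
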